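/- arXiv:2310.19726 — 2 statements merged into one kernel-verified Lean document; each statement's English description precedes it below -/
import Mathlib

section
/- Fix d ≥ 1 and integers m, m̄ with 0 < m̄ ≤ m and m < 2^(2^d). Define α(d) = ∏_{k=1}^{d} (1 - m̄/(m-k+1))^(2^(k-1)) (assuming m ≥ d+1 so all factors are defined and in [0,1)). Then 2^(2^d) · (1-α(d))/(1-α(d+1)) > 1; equivalently (1-α(d))/2^(2^d) > (1-α(d+1))/2^(2^(d+1)). -/
/-- With `α(j) = ∏_{k=1}^{j} (1 - m̄/(m-k+1))^(2^(k-1))` (all factors in [0,1)),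
and `m < 2^(2^d)`, the Rashomon ratio `(1-α(d))/2^(2^d)` for depth-`d` trees is
strictly larger than the ratio `(1-α(d+1))/2^(2^(d+1))` for depth-`d+1` trees;
equivalently `2^(2^d)·(1-α(d))/(1-α(d+1)) > 1`. -/
theorem rashomon_ratio_trees (d m mbar : ℕ) (hd : 1 ≤ d)
    (hmbar : 0 < mbar) (hmd : d + 1 ≤ m) (hmbarle : mbar ≤ m - d)
    (hm2 : m < 2 ^ (2 ^ d))
    (α : ℕ → ℝ)
    (hα : ∀ j, α j = ∏ k ∈ Finset.Icc 1 j,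
      (1 - (mbar : ℝ) / ((m : ℝ) - (k : ℝ) + 1)) ^ (2 ^ (k - 1))) :
    1 < (2 : ℝ) ^ (2 ^ d) * (1 - α d) / (1 - α (d + 1)) ∧
    (1 - α (d + 1)) / (2 : ℝ) ^ (2 ^ (d + 1)) < (1 - α d) / (2 : ℝ) ^ (2 ^ d) := by
  have hm0 : (0 : ℝ) < m := by
    have : 0 < m := by omega
    exact_mod_cast this
  -- each factor is in [0,1] for k ≤ d+1
  have hfac : ∀ k, 1 ≤ k → k ≤ d + 1 →
      0 ≤ (1 - (mbar : ℝ) / ((m : ℝ) - (k : ℝ) + 1)) ∧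
      (1 - (mbar : ℝ) / ((m : ℝ) - (k : ℝ) + 1)) ≤ 1 := by
    intro k hk1 hk2
    have hkm : (k : ℝ) ≤ (m : ℝ) := by
      exact_mod_cast (by omega : k ≤ m)
    have hden : (0 : ℝ) < (m : ℝ) - (k : ℝ) + 1 := by linarith
    constructor
    · have hnum : (mbar : ℝ) ≤ (m : ℝ) - (k : ℝ) + 1 := by
        have h1 : mbar + k ≤ m + 1 := by omega
        have h2 : (mbar : ℝ) + (k : ℝ) ≤ (m : ℝ) + 1 := by exact_mod_cast h1
        linarith
      have := div_le_one_of_le₀ hnum hden.le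
      linarith
    · have : 0 ≤ (mbar : ℝ) / ((m : ℝ) - (k : ℝ) + 1) := by positivity
      linarith
  have hαnn : ∀ j, j ≤ d + 1 → 0 ≤ α j := by
    intro j hj
    rw [hα]
    apply Finset.prod_nonneg
    intro k hk
    simp only [Finset.mem_Icc] at hk
    exact pow_nonneg (hfac k hk.1 (by omega)).1 _
  have hαle : ∀ j, 1 ≤ j → j ≤ d + 1 → α j ≤ 1 - (mbar : ℝ) / m := by
    intro j h1 h2
    rw [hα]
    have h1mem : (1 : ℕ) ∈ Finset.Icc 1 j := Finset.mem_Icc.mpr ⟨le_refl 1, h1⟩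
    rw [← Finset.mul_prod_erase _ _ h1mem]
    have hrest : ∏ k ∈ (Finset.Icc 1 j).erase 1,
        (1 - (mbar : ℝ) / ((m : ℝ) - (k : ℝ) + 1)) ^ (2 ^ (k - 1)) ≤ 1 := by
      apply Finset.prod_le_one
      · intro k hk
        have hk' := Finset.mem_of_mem_erase hk
        simp only [Finset.mem_Icc] at hk'
        exact pow_nonneg (hfac k hk'.1 (by omega)).1 _
      · intro k hk
        have hk' := Finset.mem_of_mem_erase hk
        simp only [Finset.mem_Icc] at hk'
        exact pow_le_one₀ (hfac k hk'.1 (by omega)).1 (hfac k hk'.1 (by omega)).2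
    have hf1 := hfac 1 le_rfl (by omega)
    have heq : (1 - (mbar : ℝ) / ((m : ℝ) - ((1 : ℕ) : ℝ) + 1)) ^ (2 ^ (1 - 1)) =
        1 - (mbar : ℝ) / m := by norm_num
    calc (1 - (mbar : ℝ) / ((m : ℝ) - ((1 : ℕ) : ℝ) + 1)) ^ (2 ^ (1 - 1)) *
          ∏ k ∈ (Finset.Icc 1 j).erase 1,
            (1 - (mbar : ℝ) / ((m : ℝ) - (k : ℝ) + 1)) ^ (2 ^ (k - 1))
        ≤ (1 - (mbar : ℝ) / ((m : ℝ) - ((1 : ℕ) : ℝ) + 1)) ^ (2 ^ (1 - 1)) * 1 := by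
          apply mul_le_mul_of_nonneg_left hrest
          apply pow_nonneg
          have := hf1.1
          push_cast
          push_cast at this
          linarith
      _ = 1 - (mbar : ℝ) / m := by rw [mul_one, heq]
  have hP : (0 : ℝ) < (2 : ℝ) ^ (2 ^ d) := by positivity
  have hmP : (m : ℝ) < (2 : ℝ) ^ (2 ^ d) := by exact_mod_cast hm2
  have hmbar1 : (1 : ℝ) ≤ (mbar : ℝ) := by exact_mod_cast hmbar
  -- key: 1 < 2^(2^d) * (1 - α d)
  have hαd : α d ≤ 1 - (mbar : ℝ) / m := hαle d hd (by omega)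
  have h1m : (1 : ℝ) / m ≤ (mbar : ℝ) / m := by gcongr
  have hinv : 1 / (2 : ℝ) ^ (2 ^ d) < 1 / (m : ℝ) :=
    one_div_lt_one_div_of_lt hm0 hmP
  have hkey : 1 < (2 : ℝ) ^ (2 ^ d) * (1 - α d) := by
    have h3 : 1 / (2 : ℝ) ^ (2 ^ d) < 1 - α d := by linarith
    have := (div_lt_iff₀ hP).mp h3
    linarith [this]
  have hdpos : 0 < 1 - α (d + 1) := by
    have h4 : α (d + 1) ≤ 1 - (mbar : ℝ) / m := hαle (d + 1) (by omega) le_rfl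
    have h5 : 0 < (mbar : ℝ) / m := by positivity
    linarith
  have hdle1 : 1 - α (d + 1) ≤ 1 := by
    have := hαnn (d + 1) le_rfl
    linarith
  constructor
  · rw [one_lt_div hdpos]
    linarith
  · rw [div_lt_div_iff₀ (by positivity) hP]
    have h2P : (2 : ℝ) ^ (2 ^ (d + 1)) = (2 : ℝ) ^ (2 ^ d) * (2 : ℝ) ^ (2 ^ d) := by
      rw [← pow_add]
      congr 1
      ring
    rw [h2P]
    nlinarith [mul_lt_mul_of_pos_right hkey hP]
end

section
/- For ridge regression with regularization C+λ on a non-zero data matrix X with singular values σ_i, the Rashomon ratio equals (θ/L_max)^(m/2) · ∏_{i=1}^m sqrt((C+λ)/(σ_i² + C + λ)), and this quantity is strictly increasing in λ > 0. In particular, for 0 < λ₁ < λ₂, the Rashomon ratio at noise level λ₁ is strictly smaller than at λ₂. -/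
/-- For ridge regression with regularization `C + λ` on a nonzero data matrix with
singular values `σ i`, the Rashomon ratio (Rashomon-ellipsoid volume over
hypothesis-ball volume) equals
`(θ/L_max)^(m/2) · ∏ i, √((C+λ)/(σ i² + C + λ))`, is strictly increasing in `λ > 0`,
and in particular is strictly smaller at `λ₁` than at `λ₂` whenever `0 < λ₁ < λ₂`. -/
theorem ridge_rashomon_ratio_increases (m : ℕ) (hm : 0 < m)
    (σ : Fin m → ℝ) (hσ : ∃ i, σ i ≠ 0)
    (C θ Lmax : ℝ) (hC : 0 < C) (hθ : 0 < θ) (hLmax : 0 < Lmax)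
    (Vrash Vball ratio : ℝ → ℝ)
    (hVrash : ∀ lam, Vrash lam =
      (Real.pi * θ) ^ ((m : ℝ) / 2) / Real.Gamma ((m : ℝ) / 2 + 1) *
        ∏ i, 1 / Real.sqrt (σ i ^ 2 + C + lam))
    (hVball : ∀ lam, Vball lam =
      Real.pi ^ ((m : ℝ) / 2) / Real.Gamma ((m : ℝ) / 2 + 1) *
        (Lmax / (C + lam)) ^ ((m : ℝ) / 2))
    (hratio : ∀ lam, ratio lam = Vrash lam / Vball lam) :
    (∀ lam : ℝ, 0 < lam →
      ratio lam = (θ / Lmax) ^ ((m : ℝ) / 2) *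
        ∏ i, Real.sqrt ((C + lam) / (σ i ^ 2 + C + lam))) ∧
    StrictMonoOn ratio (Set.Ioi (0 : ℝ)) ∧
    ∀ lam₁ lam₂ : ℝ, 0 < lam₁ → lam₁ < lam₂ → ratio lam₁ < ratio lam₂ := by
  have hΓ : 0 < Real.Gamma ((m : ℝ) / 2 + 1) := Real.Gamma_pos_of_pos (by positivity)
  have hπ := Real.pi_pos
  -- Part 1: the closed form
  have key : ∀ lam : ℝ, 0 < lam → ratio lam = (θ / Lmax) ^ ((m : ℝ) / 2) *
      ∏ i, Real.sqrt ((C + lam) / (σ i ^ 2 + C + lam)) := by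
    intro lam hlam
    have hc : 0 < C + lam := by linarith
    have hb : ∀ i : Fin m, 0 < σ i ^ 2 + C + lam := fun i => by positivity
    have hsc : Real.sqrt (C + lam) ^ m = (C + lam) ^ ((m : ℝ) / 2) := by
      rw [← Real.rpow_natCast (Real.sqrt (C + lam)) m, Real.sqrt_eq_rpow,
        ← Real.rpow_mul hc.le]
      congr 1
      ring
    have hprod : ∏ i, Real.sqrt ((C + lam) / (σ i ^ 2 + C + lam))
        = (C + lam) ^ ((m : ℝ) / 2) * ∏ i, (1 / Real.sqrt (σ i ^ 2 + C + lam)) := by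
      rw [Finset.prod_congr rfl (fun i _ => by
        rw [Real.sqrt_div hc.le, div_eq_mul_one_div] :
        ∀ i ∈ Finset.univ, Real.sqrt ((C + lam) / (σ i ^ 2 + C + lam))
          = Real.sqrt (C + lam) * (1 / Real.sqrt (σ i ^ 2 + C + lam))),
        Finset.prod_mul_distrib, Finset.prod_const, Finset.card_univ, Fintype.card_fin, hsc]
    rw [hratio, hVrash, hVball, hprod, Real.mul_rpow hπ.le hθ.le,
      Real.div_rpow hLmax.le hc.le, Real.div_rpow hθ.le hLmax.le]
    have h1 : Real.pi ^ ((m : ℝ) / 2) ≠ 0 := (Real.rpow_pos_of_pos hπ _).ne'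
    have h2 : Lmax ^ ((m : ℝ) / 2) ≠ 0 := (Real.rpow_pos_of_pos hLmax _).ne'
    have h3 : (C + lam) ^ ((m : ℝ) / 2) ≠ 0 := (Real.rpow_pos_of_pos hc _).ne'
    field_simp
  -- Part 2: strict monotonicity
  have mono : StrictMonoOn ratio (Set.Ioi (0 : ℝ)) := by
    intro x hx y hy hxy
    rw [key x hx, key y hy]
    have hx0 : (0 : ℝ) < x := hx
    have hy0 : (0 : ℝ) < y := hy
    refine mul_lt_mul_of_pos_left ?_ (Real.rpow_pos_of_pos (div_pos hθ hLmax) _)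
    refine Finset.prod_lt_prod ?_ ?_ ?_
    · intro i _
      exact Real.sqrt_pos.2 (div_pos (by linarith) (by positivity))
    · intro i _
      apply Real.sqrt_le_sqrt
      rw [div_le_div_iff₀ (by positivity) (by positivity)]
      nlinarith [mul_nonneg (sub_nonneg.2 hxy.le) (sq_nonneg (σ i))]
    · obtain ⟨i, hi⟩ := hσ
      refine ⟨i, Finset.mem_univ i, ?_⟩
      have hs : 0 < σ i ^ 2 := by positivity
      apply Real.sqrt_lt_sqrt (by positivity)
      rw [div_lt_div_iff₀ (by positivity) (by positivity)]
      nlinarith [mul_pos (sub_pos.2 hxy) hs]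
  exact ⟨key, mono, fun l1 l2 h1 h12 =>
    mono (Set.mem_Ioi.2 h1) (Set.mem_Ioi.2 (h1.trans h12)) h12⟩
end
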